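/- Let A, B be affine maps ℝ^m → S^n with B(x) ≻ 0 on a convex domain D. Fix x ∈ D, let λ* = λ₁(A(x), B(x)), let v₁,…,v_t be generalized eigenvectors for λ* with v_iᵀ B(x) v_j = δ_ij, V = [v₁,…,v_t], and let U be a t×t symmetric positive semidefinite matrix with trace 1. If y ∈ D satisfies λ₁(A(y), B(y)) < λ*, then ⟨[⟨U, Vᵀ(A_e − λ* B_e)V⟩]_{e=1}^m, y − x⟩ = ⟨U, Vᵀ(A(y) − λ* B(y))V⟩ < 0. -/

import Mathlib

open Matrix

lemma myDotSymm {n : ℕ} (M : Matrix (Fin n) (Fin n) ℝ) (hM : Mᵀ = M) (a b : Fin n → ℝ) :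
    a ⬝ᵥ (M *ᵥ b) = (M *ᵥ a) ⬝ᵥ b := by
  rw [Matrix.dotProduct_mulVec, ← Matrix.mulVec_transpose, hM]

lemma myHermOfSymm {n : ℕ} {M : Matrix (Fin n) (Fin n) ℝ} (hM : M.IsSymm) : M.IsHermitian := by
  rw [Matrix.IsHermitian, Matrix.conjTranspose_eq_transpose_of_trivial]; exact hM

lemma myDotSelfPos {n : ℕ} {u : Fin n → ℝ} (hu : u ≠ 0) : 0 < u ⬝ᵥ u := by
  obtain ⟨i, hi⟩ := Function.ne_iff.mp hu
  refine Finset.sum_pos' (fun j _ => mul_self_nonneg _) ⟨i, Finset.mem_univ i, ?_⟩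
  exact mul_self_pos.mpr hi

lemma myQuadLe {n : ℕ} {S : Matrix (Fin n) (Fin n) ℝ} (hS : S.IsHermitian) {c : ℝ}
    (hc : ∀ i, hS.eigenvalues i ≤ c) (w : Fin n → ℝ) :
    w ⬝ᵥ (S *ᵥ w) ≤ c * (w ⬝ᵥ w) := by
  set P : Matrix (Fin n) (Fin n) ℝ := ↑hS.eigenvectorUnitary with hPdef
  have hPmem := hS.eigenvectorUnitary.2
  have hP1 : P * star P = 1 := (Matrix.mem_unitaryGroup_iff).mp hPmem
  have hstar : star P = Pᵀ := by
    rw [Matrix.star_eq_conjTranspose, Matrix.conjTranspose_eq_transpose_of_trivial]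
  set u : Fin n → ℝ := star P *ᵥ w with hu
  have huw : u = w ᵥ* P := by rw [hu, hstar, Matrix.mulVec_transpose]
  have hdot : ∀ z : Fin n → ℝ, w ⬝ᵥ (P *ᵥ z) = u ⬝ᵥ z := by
    intro z; rw [Matrix.dotProduct_mulVec, ← huw]
  have hww : u ⬝ᵥ u = w ⬝ᵥ w := by
    calc u ⬝ᵥ u = (w ᵥ* P) ⬝ᵥ (star P *ᵥ w) := by rw [← huw, ← hu]
      _ = w ⬝ᵥ (P *ᵥ (star P *ᵥ w)) := (Matrix.dotProduct_mulVec _ _ _).symm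
      _ = w ⬝ᵥ w := by rw [Matrix.mulVec_mulVec, hP1, Matrix.one_mulVec]
  have hspec := hS.spectral_theorem
  have hdiag : Matrix.diagonal (RCLike.ofReal ∘ hS.eigenvalues) = Matrix.diagonal hS.eigenvalues := by
    ext i j
    by_cases h : i = j <;> simp [Matrix.diagonal, h]
  have hSw : S *ᵥ w = P *ᵥ ((Matrix.diagonal hS.eigenvalues) *ᵥ u) := by
    conv_lhs => rw [hspec]
    rw [hdiag, Unitary.conjStarAlgAut_apply, ← Matrix.mulVec_mulVec, ← Matrix.mulVec_mulVec, ← hPdef, ← hu]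
  rw [hSw, hdot, ← hww]
  have : u ⬝ᵥ (Matrix.diagonal hS.eigenvalues *ᵥ u) = ∑ i, hS.eigenvalues i * (u i * u i) := by
    simp only [dotProduct, Matrix.mulVec_diagonal]
    exact Finset.sum_congr rfl fun i _ => by ring
  rw [this, dotProduct, Finset.mul_sum]
  exact Finset.sum_le_sum fun i _ =>
    mul_le_mul_of_nonneg_right (hc i) (mul_self_nonneg _)

open scoped MatrixOrder in
lemma mySqrt {n : ℕ} {M : Matrix (Fin n) (Fin n) ℝ} (hM : M.PosSemidef) :
    ∃ C : Matrix (Fin n) (Fin n) ℝ, C * C = M ∧ Cᵀ = C := by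
  refine ⟨CFC.sqrt M, CFC.sqrt_mul_sqrt_self M (Matrix.nonneg_iff_posSemidef.mpr hM), ?_⟩
  rw [← Matrix.conjTranspose_eq_transpose_of_trivial]
  exact (Matrix.nonneg_iff_posSemidef.mp (CFC.sqrt_nonneg M)).1

open scoped MatrixOrder in
lemma myFactor {t : ℕ} {U : Matrix (Fin t) (Fin t) ℝ} (hU : U.PosSemidef) :
    ∃ Cu : Matrix (Fin t) (Fin t) ℝ, U = Cuᴴ * Cu := by
  obtain ⟨B, hB⟩ := CStarAlgebra.nonneg_iff_eq_star_mul_self.mp (Matrix.nonneg_iff_posSemidef.mpr hU)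
  exact ⟨B, by rw [hB, Matrix.star_eq_conjTranspose]⟩

/-- Key inequality for pseudoconvexity of the maximum generalized eigenvalue:
with `A, B` affine, `λ* = λ₁(A(x), B(x))`, `V` a matrix of `B(x)`-orthonormal
generalized eigenvectors for `λ*`, and `U ⪰ 0` with trace `1`, if
`λ₁(A(y), B(y)) < λ*` then
`⟨[⟨U, Vᵀ(A_e - λ*B_e)V⟩]ₑ, y - x⟩ = ⟨U, Vᵀ(A(y) - λ*B(y))V⟩ < 0`. -/
theorem clarke_subgradient_pseudoconvex_ineq {m n t : ℕ}
    (A0 B0 : Matrix (Fin n) (Fin n) ℝ) (Ae Be : Fin m → Matrix (Fin n) (Fin n) ℝ)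
    (A B : (Fin m → ℝ) → Matrix (Fin n) (Fin n) ℝ)
    (hA : ∀ z, A z = A0 + ∑ e, z e • Ae e)
    (hB : ∀ z, B z = B0 + ∑ e, z e • Be e)
    (hAsymm : ∀ z, (A z).IsSymm) (hBsymm : ∀ z, (B z).IsSymm)
    (D : Set (Fin m → ℝ)) (hD : Convex ℝ D)
    (hBpos : ∀ z ∈ D, (B z).PosDef)
    (x y : Fin m → ℝ) (hx : x ∈ D) (hy : y ∈ D)
    (lamstar : ℝ)
    (hlamstar :
      IsGreatest {r : ℝ | ∃ w : Fin n → ℝ, w ≠ 0 ∧ A x *ᵥ w = r • (B x *ᵥ w)} lamstar)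
    (v : Fin t → (Fin n → ℝ))
    (heig : ∀ i, A x *ᵥ v i = lamstar • (B x *ᵥ v i))
    (horth : ∀ i j, v i ⬝ᵥ (B x *ᵥ v j) = if i = j then (1 : ℝ) else 0)
    (V : Matrix (Fin n) (Fin t) ℝ) (hV : V = Matrix.of fun i j => v j i)
    (U : Matrix (Fin t) (Fin t) ℝ) (hU : U.PosSemidef) (hUtr : U.trace = 1)
    (lamy : ℝ)
    (hlamy :
      IsGreatest {r : ℝ | ∃ w : Fin n → ℝ, w ≠ 0 ∧ A y *ᵥ w = r • (B y *ᵥ w)} lamy)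
    (hlt : lamy < lamstar) :
    (∑ e, (U * (Vᵀ * (Ae e - lamstar • Be e) * V)).trace * (y e - x e)
        = (U * (Vᵀ * (A y - lamstar • B y) * V)).trace) ∧
    (U * (Vᵀ * (A y - lamstar • B y) * V)).trace < 0 := by
  -- Part 1: telescoping
  have hsum : ∀ (Ms : Fin m → Matrix (Fin n) (Fin n) ℝ),
      ∑ e, y e • Ms e = ∑ e, x e • Ms e + ∑ e, (y e - x e) • Ms e := by
    intro Ms
    rw [← Finset.sum_add_distrib]
    exact Finset.sum_congr rfl fun e _ => by
      rw [← add_smul, add_sub_cancel]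
  have hsplit : ∑ e, (y e - x e) • (Ae e - lamstar • Be e)
      = ∑ e, (y e - x e) • Ae e - lamstar • ∑ e, (y e - x e) • Be e := by
    rw [Finset.smul_sum, ← Finset.sum_sub_distrib]
    exact Finset.sum_congr rfl fun e _ => by rw [smul_sub, smul_comm]
  have hMsum : A y - lamstar • B y
      = (A x - lamstar • B x) + ∑ e, (y e - x e) • (Ae e - lamstar • Be e) := by
    rw [hA y, hB y, hA x, hB x, hsum Ae, hsum Be, hsplit]
    simp only [smul_add]
    abel
  have hMxV : (A x - lamstar • B x) * V = 0 := by
    ext i j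
    have h0 : (A x - lamstar • B x) *ᵥ v j = 0 := by
      rw [Matrix.sub_mulVec, Matrix.smul_mulVec, heig j, sub_self]
    have := congrFun h0 i
    simpa [Matrix.mul_apply, Matrix.mulVec, dotProduct, hV] using this
  have hkey1 : Vᵀ * (A y - lamstar • B y) * V
      = ∑ e, (y e - x e) • (Vᵀ * (Ae e - lamstar • Be e) * V) := by
    rw [hMsum, Matrix.mul_add, Matrix.add_mul, Matrix.mul_assoc, hMxV, Matrix.mul_zero,
      zero_add, Matrix.mul_sum, Matrix.sum_mul]
    refine Finset.sum_congr rfl fun e _ => ?_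
    rw [Matrix.mul_smul, Matrix.smul_mul]
  have etrace : (U * (Vᵀ * (A y - lamstar • B y) * V)).trace
      = ∑ e, (y e - x e) * (U * (Vᵀ * (Ae e - lamstar • Be e) * V)).trace := by
    rw [hkey1, Matrix.mul_sum, Matrix.trace_sum]
    refine Finset.sum_congr rfl fun e _ => ?_
    rw [Matrix.mul_smul, Matrix.trace_smul, smul_eq_mul]
  constructor
  · rw [etrace]
    exact Finset.sum_congr rfl fun e _ => mul_comm _ _
  -- Part 2: negativity
  · have hBy := hBpos y hy
    obtain ⟨C, hCC, hCT⟩ := mySqrt hBy.posSemidef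
    have hdet : IsUnit C.det := by
      have hmul : C.det * C.det = (B y).det := by rw [← Matrix.det_mul, hCC]
      refine isUnit_iff_ne_zero.mpr fun h => ?_
      have := hBy.det_pos
      rw [← hmul, h, zero_mul] at this
      exact lt_irrefl 0 this
    have hCi : C * C⁻¹ = 1 := Matrix.mul_nonsing_inv C hdet
    have hiC : C⁻¹ * C = 1 := Matrix.nonsing_inv_mul C hdet
    have hCiT : (C⁻¹)ᵀ = C⁻¹ := by rw [Matrix.transpose_nonsing_inv, hCT]
    have hAyT : (A y)ᵀ = A y := hAsymm y
    set S : Matrix (Fin n) (Fin n) ℝ := C⁻¹ * A y * C⁻¹ with hSdef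
    have hST : Sᵀ = S := by
      rw [hSdef, Matrix.transpose_mul, Matrix.transpose_mul, hCiT, hAyT, Matrix.mul_assoc]
    have hSH : S.IsHermitian := myHermOfSymm hST
    have heigle : ∀ i, hSH.eigenvalues i ≤ lamy := by
      intro i
      set b : Fin n → ℝ := ⇑(hSH.eigenvectorBasis i) with hbdef
      have hb : S *ᵥ b = hSH.eigenvalues i • b := hSH.mulVec_eigenvectorBasis i
      have hbne : b ≠ 0 := by
        intro h
        exact hSH.eigenvectorBasis.orthonormal.ne_zero i (by ext j; exact congrFun h j)
      apply hlamy.2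
      refine ⟨C⁻¹ *ᵥ b, ?_, ?_⟩
      · intro h
        apply hbne
        have h1 : C *ᵥ (C⁻¹ *ᵥ b) = 0 := by rw [h, Matrix.mulVec_zero]
        rwa [Matrix.mulVec_mulVec, hCi, Matrix.one_mulVec] at h1
      · have h1 : C⁻¹ *ᵥ (A y *ᵥ (C⁻¹ *ᵥ b)) = hSH.eigenvalues i • b := by
          rw [Matrix.mulVec_mulVec, Matrix.mulVec_mulVec]; exact hb
        have h2 : A y *ᵥ (C⁻¹ *ᵥ b) = hSH.eigenvalues i • (C *ᵥ b) := by
          have h3 := congrArg (fun z => C *ᵥ z) h1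
          simp only [Matrix.mulVec_smul, Matrix.mulVec_mulVec] at h3
          rwa [← Matrix.mul_assoc, hCi, Matrix.one_mul, ← Matrix.mulVec_mulVec] at h3
        have h3 : B y *ᵥ (C⁻¹ *ᵥ b) = C *ᵥ b := by
          rw [Matrix.mulVec_mulVec, ← hCC, Matrix.mul_assoc, hCi, Matrix.mul_one]
        rw [h2, h3]
    have hquad : ∀ w : Fin n → ℝ, w ≠ 0 → w ⬝ᵥ ((A y - lamstar • B y) *ᵥ w) < 0 := by
      intro w hw
      set u : Fin n → ℝ := C *ᵥ w with hudef
      have hwu : C⁻¹ *ᵥ u = w := by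
        rw [hudef, Matrix.mulVec_mulVec, hiC, Matrix.one_mulVec]
      have hune : u ≠ 0 := by
        intro h
        apply hw
        rw [← hwu, h, Matrix.mulVec_zero]
      have hSu : S *ᵥ u = C⁻¹ *ᵥ (A y *ᵥ w) := by
        rw [hSdef, ← Matrix.mulVec_mulVec, ← Matrix.mulVec_mulVec, hwu]
      have hA' : w ⬝ᵥ (A y *ᵥ w) = u ⬝ᵥ (S *ᵥ u) := by
        calc w ⬝ᵥ (A y *ᵥ w) = (C⁻¹ *ᵥ u) ⬝ᵥ (A y *ᵥ w) := by rw [hwu]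
          _ = u ⬝ᵥ (C⁻¹ *ᵥ (A y *ᵥ w)) := (myDotSymm _ hCiT _ _).symm
          _ = u ⬝ᵥ (S *ᵥ u) := by rw [hSu]
      have hB' : w ⬝ᵥ (B y *ᵥ w) = u ⬝ᵥ u := by
        rw [← hCC, ← Matrix.mulVec_mulVec, myDotSymm C hCT]
      have hupos : 0 < u ⬝ᵥ u := myDotSelfPos hune
      have hle : u ⬝ᵥ (S *ᵥ u) ≤ lamy * (u ⬝ᵥ u) := myQuadLe hSH heigle u
      have hexp : w ⬝ᵥ ((A y - lamstar • B y) *ᵥ w)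
          = w ⬝ᵥ (A y *ᵥ w) - lamstar * (w ⬝ᵥ (B y *ᵥ w)) := by
        rw [Matrix.sub_mulVec, dotProduct_sub, Matrix.smul_mulVec,
          dotProduct_smul, smul_eq_mul]
      rw [hexp, hA', hB']
      have : lamy * (u ⬝ᵥ u) < lamstar * (u ⬝ᵥ u) := mul_lt_mul_of_pos_right hlt hupos
      linarith
    set N : Matrix (Fin t) (Fin t) ℝ := Vᵀ * (A y - lamstar • B y) * V with hNdef
    have hNneg : ∀ z : Fin t → ℝ, z ≠ 0 → z ⬝ᵥ (N *ᵥ z) < 0 := by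
      intro z hz
      have hVz : V *ᵥ z ≠ 0 := by
        intro h
        apply hz
        funext i
        have h2 : V *ᵥ z = ∑ j, z j • v j := by
          funext k
          simp only [Matrix.mulVec, dotProduct, hV, Matrix.of_apply,
            Finset.sum_apply, Pi.smul_apply, smul_eq_mul]
          exact Finset.sum_congr rfl fun j _ => mul_comm _ _
        have h3 : v i ⬝ᵥ (B x *ᵥ (V *ᵥ z)) = z i := by
          rw [h2]
          have h4 : B x *ᵥ (∑ j, z j • v j) = ∑ j, z j • (B x *ᵥ v j) := by
            rw [← Matrix.mulVecLin_apply, map_sum]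
            simp [Matrix.mulVecLin_apply]
          rw [h4]
          calc v i ⬝ᵥ (∑ j, z j • (B x *ᵥ v j))
              = ∑ j, z j * (v i ⬝ᵥ (B x *ᵥ v j)) := by
                simp only [dotProduct, Finset.sum_apply, Pi.smul_apply,
                  smul_eq_mul, Finset.mul_sum]
                rw [Finset.sum_comm]
                exact Finset.sum_congr rfl fun j _ =>
                  Finset.sum_congr rfl fun k _ => by ring
            _ = z i := by simp [horth]
        rw [h, Matrix.mulVec_zero, dotProduct_zero] at h3
        exact h3.symm
      have hrw : z ⬝ᵥ (N *ᵥ z)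
          = (V *ᵥ z) ⬝ᵥ ((A y - lamstar • B y) *ᵥ (V *ᵥ z)) := by
        rw [hNdef, ← Matrix.mulVec_mulVec, ← Matrix.mulVec_mulVec,
          Matrix.dotProduct_mulVec, Matrix.vecMul_transpose]
      rw [hrw]
      exact hquad _ hVz
    obtain ⟨Cu, hCu⟩ := myFactor hU
    have htr : (U * N).trace = (Cu * N * Cuᴴ).trace := by
      rw [hCu, Matrix.trace_mul_cycle, Matrix.trace_mul_cycle]
    have hdiagEntry : ∀ i, (Cu * N * Cuᴴ) i i
        = (fun j => Cu i j) ⬝ᵥ (N *ᵥ fun j => Cu i j) := by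
      intro i
      simp only [Matrix.mul_apply, Matrix.mulVec, dotProduct,
        Matrix.conjTranspose_apply, star_trivial, Finset.sum_mul, Finset.mul_sum]
      rw [Finset.sum_comm]
      exact Finset.sum_congr rfl fun a _ => Finset.sum_congr rfl fun b _ => by ring
    have hrowne : ∃ i, (fun j => Cu i j) ≠ 0 := by
      by_contra h
      push_neg at h
      have hCu0 : Cu = 0 := by
        ext i j
        exact congrFun (h i) j
      rw [hCu0] at hCu
      simp only [Matrix.mul_zero, Matrix.conjTranspose_zero, Matrix.zero_mul] at hCu
      rw [hCu, Matrix.trace_zero] at hUtr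
      exact one_ne_zero hUtr.symm
    obtain ⟨i0, hi0⟩ := hrowne
    have : (Cu * N * Cuᴴ).trace < 0 := by
      rw [Matrix.trace]
      have hgoal : ∑ i, (Cu * N * Cuᴴ).diag i < ∑ i : Fin t, (0 : ℝ) := by
        refine Finset.sum_lt_sum (fun i _ => ?_) ⟨i0, Finset.mem_univ i0, ?_⟩
        · by_cases hri : (fun j => Cu i j) = 0
          · rw [Matrix.diag_apply, hdiagEntry i, hri, zero_dotProduct]
          · rw [Matrix.diag_apply, hdiagEntry i]
            exact le_of_lt (hNneg _ hri)
        · rw [Matrix.diag_apply, hdiagEntry i0]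
          exact hNneg _ hi0
      simpa using hgoal
    rw [htr]
    exact this
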